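/- Let t₀ ∈ ℝ and s ≥ 1 a natural number. Suppose iteratedDeriv j κ1 t₀ = 0 and iteratedDeriv j κ2 t₀ = 0 for all j with 0 ≤ j ≤ s − 2, and (iteratedDeriv (s−1) κ1 t₀, iteratedDeriv (s−1) κ2 t₀) ≠ (0, 0) (so γ has finite type (1, 1+s, 1+s+r) at t₀ and its osculating plane there is the span of {deriv γ t₀, iteratedDeriv (s+1) γ t₀}). Then the osculating plane, span of {deriv γ t₀, iteratedDeriv (s+1) γ t₀}, coincides with the tangent plane of the surface, span of {e1 t₀, e2 t₀}, if and only if iteratedDeriv (s−1) κ2 t₀ = 0. -/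

import Mathlib

open scoped RealInnerProductSpace

noncomputable def cross3 (u v : EuclideanSpace ℝ (Fin 3)) : EuclideanSpace ℝ (Fin 3) :=
  (WithLp.equiv 2 (Fin 3 → ℝ)).symm
    ![u 1 * v 2 - u 2 * v 1, u 2 * v 0 - u 0 * v 2, u 0 * v 1 - u 1 * v 0]

noncomputable def det3 (u v w : EuclideanSpace ℝ (Fin 3)) : ℝ :=
  Matrix.det (Matrix.of (fun i j => ![u, v, w] j i))

open Finset

section Aux

variable {F : Type*} [NormedAddCommGroup F] [NormedSpace ℝ F]

lemma my_iteratedDeriv_contDiff {f : ℝ → F} (hf : ContDiff ℝ (⊤:ℕ∞) f) (k : ℕ) :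
    ContDiff ℝ (⊤:ℕ∞) (iteratedDeriv k f) := by
  rw [iteratedDeriv_eq_iterate]
  exact hf.iterate_deriv k

lemma my_leibniz_smul (f : ℝ → ℝ) (g : ℝ → F) (hf : ContDiff ℝ (⊤:ℕ∞) f)
    (hg : ContDiff ℝ (⊤:ℕ∞) g) :
    ∀ (n : ℕ) (t : ℝ), iteratedDeriv n (fun x => f x • g x) t =
      ∑ k ∈ Finset.range (n + 1),
        (n.choose k : ℝ) • iteratedDeriv k f t • iteratedDeriv (n - k) g t := by
  intro n
  induction n with
  | zero => intro t; simp
  | succ n ih =>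
    intro t
    have hdf : ∀ k, Differentiable ℝ (iteratedDeriv k f) := fun k =>
      (my_iteratedDeriv_contDiff hf k).differentiable (by simp)
    have hdg : ∀ k, Differentiable ℝ (iteratedDeriv k g) := fun k =>
      (my_iteratedDeriv_contDiff hg k).differentiable (by simp)
    have hterm : ∀ k : ℕ,
        deriv (fun x => (n.choose k : ℝ) • iteratedDeriv k f x • iteratedDeriv (n - k) g x) t
          = (n.choose k : ℝ) • (iteratedDeriv (k+1) f t • iteratedDeriv (n - k) g t
              + iteratedDeriv k f t • iteratedDeriv (n - k + 1) g t) := by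
      intro k
      rw [deriv_fun_const_smul _ (((hdf k).differentiableAt).fun_smul ((hdg (n-k)).differentiableAt)),
        deriv_fun_smul ((hdf k).differentiableAt) ((hdg (n-k)).differentiableAt)]
      rw [← iteratedDeriv_succ, ← iteratedDeriv_succ]; rw [add_comm]
    rw [iteratedDeriv_succ, funext ih, deriv_fun_sum (fun k _ =>
      ((differentiableAt_const _).fun_smul (((hdf k).differentiableAt).fun_smul
        ((hdg (n-k)).differentiableAt))))]
    simp only [hterm, smul_add]
    rw [Finset.sum_add_distrib]
    set A : ℕ → ℕ → F := fun i j => iteratedDeriv i f t • iteratedDeriv j g t with hA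
    have e2 : ∑ k ∈ range (n+1), (n.choose k : ℝ) • A k (n - k + 1)
        = (∑ i ∈ range n, (n.choose (i+1) : ℝ) • A (i+1) (n - (i+1) + 1)) + A 0 (n+1) := by
      rw [Finset.sum_range_succ']
      simp
    have e2' : (∑ i ∈ range n, (n.choose (i+1) : ℝ) • A (i+1) (n - (i+1) + 1))
        = ∑ i ∈ range (n+1), (n.choose (i+1) : ℝ) • A (i+1) (n - i) := by
      rw [Finset.sum_range_succ, Nat.choose_succ_self]
      have : ∀ i ∈ range n, (n.choose (i+1) : ℝ) • A (i+1) (n - (i+1) + 1)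
          = (n.choose (i+1) : ℝ) • A (i+1) (n - i) := by
        intro i hi
        rw [Finset.mem_range] at hi
        congr 2
        omega
      rw [Finset.sum_congr rfl this]
      simp
    rw [e2, e2']
    have goal2 : ∑ k ∈ range (n+2), ((n+1).choose k : ℝ) • A k (n + 1 - k)
        = (∑ i ∈ range (n+1), ((n+1).choose (i+1) : ℝ) • A (i+1) (n - i)) + A 0 (n+1) := by
      rw [Finset.sum_range_succ']
      simp
    rw [goal2]
    have : ∀ i ∈ range (n+1), ((n+1).choose (i+1) : ℝ) • A (i+1) (n - i)
        = (n.choose i : ℝ) • A (i+1) (n - i) + (n.choose (i+1) : ℝ) • A (i+1) (n - i) := by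
      intro i _
      rw [Nat.choose_succ_succ, Nat.cast_add, add_smul]
    rw [Finset.sum_congr rfl this, Finset.sum_add_distrib]
    abel

lemma my_key (f : ℝ → ℝ) (g : ℝ → F) (hf : ContDiff ℝ (⊤:ℕ∞) f)
    (hg : ContDiff ℝ (⊤:ℕ∞) g) (n : ℕ) (t : ℝ)
    (h : ∀ j, j < n → iteratedDeriv j f t = 0) :
    iteratedDeriv n (fun x => f x • g x) t = iteratedDeriv n f t • g t := by
  rw [my_leibniz_smul f g hf hg n t, Finset.sum_range_succ]
  rw [Finset.sum_eq_zero]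
  · simp
  · intro k hk
    rw [Finset.mem_range] at hk
    rw [h k hk]
    simp

lemma my_iteratedDeriv_add (u v : ℝ → F) (hu : ContDiff ℝ (⊤:ℕ∞) u)
    (hv : ContDiff ℝ (⊤:ℕ∞) v) (n : ℕ) (t : ℝ) :
    iteratedDeriv n (fun x => u x + v x) t = iteratedDeriv n u t + iteratedDeriv n v t := by
  have := iteratedDerivWithin_add (Set.mem_univ t) uniqueDiffOn_univ
    (s := Set.univ) (n := n) (hu.of_le (WithTop.coe_le_coe.mpr le_top)).contDiffWithinAt
    (hv.of_le (WithTop.coe_le_coe.mpr le_top)).contDiffWithinAt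
  simpa [iteratedDerivWithin_univ, Pi.add_def] using this

end Aux

theorem stmt13
    (γ e1 e2 e3 : ℝ → EuclideanSpace ℝ (Fin 3)) (κ1 κ2 κ3 : ℝ → ℝ)
    (hγ : ContDiff ℝ (⊤ : ℕ∞) γ)
    (he1s : ContDiff ℝ (⊤ : ℕ∞) e1) (he2s : ContDiff ℝ (⊤ : ℕ∞) e2)
    (he3s : ContDiff ℝ (⊤ : ℕ∞) e3)
    (hκ1s : ContDiff ℝ (⊤ : ℕ∞) κ1) (hκ2s : ContDiff ℝ (⊤ : ℕ∞) κ2)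
    (hκ3s : ContDiff ℝ (⊤ : ℕ∞) κ3)
    (he1 : e1 = deriv γ)
    (hON : ∀ t, Orthonormal ℝ ![e1 t, e2 t, e3 t])
    (hor : ∀ t, e3 t = cross3 (e1 t) (e2 t))
    (hE1 : ∀ t, deriv e1 t = κ1 t • e2 t + κ2 t • e3 t)
    (hE2 : ∀ t, deriv e2 t = (-(κ1 t)) • e1 t + κ3 t • e3 t)
    (hE3 : ∀ t, deriv e3 t = (-(κ2 t)) • e1 t - κ3 t • e2 t)
    (t₀ : ℝ) (s : ℕ) (hs : 1 ≤ s)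
    (hvan : ∀ j : ℕ, j + 2 ≤ s → iteratedDeriv j κ1 t₀ = 0 ∧ iteratedDeriv j κ2 t₀ = 0)
    (hnz : (iteratedDeriv (s - 1) κ1 t₀, iteratedDeriv (s - 1) κ2 t₀) ≠ (0, 0)) :
    Submodule.span ℝ
        ({deriv γ t₀, iteratedDeriv (s + 1) γ t₀} : Set (EuclideanSpace ℝ (Fin 3)))
      = Submodule.span ℝ ({e1 t₀, e2 t₀} : Set (EuclideanSpace ℝ (Fin 3)))
    ↔ iteratedDeriv (s - 1) κ2 t₀ = 0 := by
  obtain ⟨m, rfl⟩ : ∃ m, s = m + 1 := ⟨s - 1, (Nat.succ_pred_eq_of_pos hs).symm⟩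
  simp only [Nat.add_sub_cancel] at hnz ⊢
  set a := iteratedDeriv m κ1 t₀ with ha
  set b := iteratedDeriv m κ2 t₀ with hb
  -- the key derivative computation
  have hvan' : ∀ j, j < m → iteratedDeriv j κ1 t₀ = 0 ∧ iteratedDeriv j κ2 t₀ = 0 := by
    intro j hj; exact hvan j (by omega)
  have hde1 : deriv e1 = fun t => κ1 t • e2 t + κ2 t • e3 t := funext hE1
  have hkey : iteratedDeriv (m + 1 + 1) γ t₀ = a • e2 t₀ + b • e3 t₀ := by
    have h1 : iteratedDeriv (m + 1 + 1) γ t₀ = iteratedDeriv (m + 1) e1 t₀ := by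
      rw [iteratedDeriv_succ', ← he1]
    have h2 : iteratedDeriv (m + 1) e1 t₀
        = iteratedDeriv m (fun t => κ1 t • e2 t + κ2 t • e3 t) t₀ := by
      rw [iteratedDeriv_succ', hde1]
    rw [h1, h2,
      my_iteratedDeriv_add (fun t => κ1 t • e2 t) (fun t => κ2 t • e3 t)
        (hκ1s.smul he2s) (hκ2s.smul he3s) m t₀,
      my_key κ1 e2 hκ1s he2s m t₀ (fun j hj => (hvan' j hj).1),
      my_key κ2 e3 hκ2s he3s m t₀ (fun j hj => (hvan' j hj).2)]
  have hdg : deriv γ t₀ = e1 t₀ := by rw [← he1]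
  -- orthonormality facts
  have O := hON t₀
  have h31 : ⟪e3 t₀, e1 t₀⟫ = 0 := by
    have := O.2 (show (2 : Fin 3) ≠ 0 by decide)
    simpa using this
  have h32 : ⟪e3 t₀, e2 t₀⟫ = 0 := by
    have := O.2 (show (2 : Fin 3) ≠ 1 by decide)
    simpa using this
  have h33 : ⟪e3 t₀, e3 t₀⟫ = 1 := by
    have := O.1 2
    simp only [Matrix.cons_val_two, Matrix.tail_cons, Matrix.head_cons] at this
    rw [real_inner_self_eq_norm_sq, this]; norm_num
  rw [hdg, hkey]
  constructor
  · intro h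
    have hmem : a • e2 t₀ + b • e3 t₀ ∈
        Submodule.span ℝ ({e1 t₀, e2 t₀} : Set (EuclideanSpace ℝ (Fin 3))) := by
      rw [← h]
      exact Submodule.subset_span (by simp)
    rw [Submodule.mem_span_pair] at hmem
    obtain ⟨c, d, hcd⟩ := hmem
    have : ⟪e3 t₀, c • e1 t₀ + d • e2 t₀⟫ = ⟪e3 t₀, a • e2 t₀ + b • e3 t₀⟫ := by rw [hcd]
    simp only [inner_add_right, real_inner_smul_right, h31, h32, h33] at this
    simpa using this.symm
  · intro hb0
    have ha0 : a ≠ 0 := by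
      intro h0
      exact hnz (by rw [ha, hb] at *; exact Prod.ext h0 hb0)
    rw [hb0, zero_smul, add_zero]
    apply le_antisymm
    · rw [Submodule.span_le]
      intro x hx
      simp only [Set.mem_insert_iff, Set.mem_singleton_iff] at hx
      rcases hx with rfl | rfl
      · exact Submodule.subset_span (by simp)
      · exact Submodule.smul_mem _ a (Submodule.subset_span (by simp))
    · rw [Submodule.span_le]
      intro x hx
      simp only [Set.mem_insert_iff, Set.mem_singleton_iff] at hx
      rcases hx with rfl | rfl
      · exact Submodule.subset_span (by simp)
      · exact Submodule.mem_span_pair.mpr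
          ⟨0, a⁻¹, by simp [smul_smul, inv_mul_cancel₀ ha0]⟩
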